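/- For every n ≥ 1, every k ≥ 2, every ℓ ≥ 1, every assignment g : Fin n → Fin ℓ of bidders to expertise groups, and every family of nonnegative valuations v_i that are weakly increasing with respect to the pointwise order on profiles and symmetric within expertise groups, setting ρ = min{n, ℓ·(k·(k−1)/2) + 1}, there exists a feasible per-bidder monotone allocation rule x such that x_i(s) ∈ {0, 1/ρ} for all i and s, and for every profile s there is a maximizer i of j ↦ v_j(s) with x_i(s) = 1/ρ; together with suitable payments this yields an ex-post incentive compatible and ex-post individually rational mechanism satisfying, for every profile s, ∑_i x_i(s)·v_i(s) ≥ (1/ρ)·max_i v_i(s). -/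

import Mathlib

open Finset Function

noncomputable def gvWinner {n k : ℕ} (hn : 0 < n) (v : Fin n → (Fin n → Fin k) → ℝ)
    (s : Fin n → Fin k) : Fin n :=
  (Finset.univ.filter fun i => ∀ j, v j s ≤ v i s).min' <| by
    obtain ⟨i, -, hi⟩ := Finset.exists_max_image Finset.univ (fun j => v j s)
      ⟨⟨0, hn⟩, Finset.mem_univ _⟩
    exact ⟨i, Finset.mem_filter.2 ⟨Finset.mem_univ _, fun j => hi j (Finset.mem_univ _)⟩⟩

lemma gvWinner_spec {n k : ℕ} (hn : 0 < n) (v : Fin n → (Fin n → Fin k) → ℝ)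
    (s : Fin n → Fin k) : ∀ j, v j s ≤ v (gvWinner hn v s) s := by
  have h : gvWinner hn v s ∈ (Finset.univ.filter fun i => ∀ j, v j s ≤ v i s) :=
    Finset.min'_mem _ _
  exact (Finset.mem_filter.1 h).2

lemma gvWinner_congr {n k : ℕ} (hn : 0 < n) (v : Fin n → (Fin n → Fin k) → ℝ)
    {s₁ s₂ : Fin n → Fin k} (h : ∀ j, v j s₁ = v j s₂) :
    gvWinner hn v s₁ = gvWinner hn v s₂ := by
  unfold gvWinner
  congr 1
  apply Finset.filter_congr
  intro i _
  simp only [h]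

/-- set of own signals at which bidder `i` is the winner (given others' signals from `s`). -/
noncomputable def gvA {n k : ℕ} (hn : 0 < n) (v : Fin n → (Fin n → Fin k) → ℝ)
    (i : Fin n) (s : Fin n → Fin k) : Finset (Fin k) :=
  Finset.univ.filter fun t => gvWinner hn v (Function.update s i t) = i

/-- threshold signal for bidder `i`. -/
noncomputable def gvTau {n k : ℕ} (hn : 0 < n) (v : Fin n → (Fin n → Fin k) → ℝ)
    (i : Fin n) (s : Fin n → Fin k) : Fin k :=
  if h : (gvA hn v i s).Nonempty then (gvA hn v i s).min' h else s i

/-- winner set: bidders who win at some own-signal below their current one. -/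
noncomputable def gvW {n k : ℕ} (hn : 0 < n) (v : Fin n → (Fin n → Fin k) → ℝ)
    (s : Fin n → Fin k) : Finset (Fin n) :=
  Finset.univ.filter fun i => ∃ t ≤ s i, gvWinner hn v (Function.update s i t) = i

lemma gvA_update {n k : ℕ} (hn : 0 < n) (v : Fin n → (Fin n → Fin k) → ℝ)
    (i : Fin n) (s : Fin n → Fin k) (t : Fin k) :
    gvA hn v i (Function.update s i t) = gvA hn v i s := by
  simp [gvA, Function.update_idem]

lemma gvTau_update {n k : ℕ} (hn : 0 < n) (v : Fin n → (Fin n → Fin k) → ℝ)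
    (i : Fin n) (s : Fin n → Fin k) (t : Fin k) (h : (gvA hn v i s).Nonempty) :
    gvTau hn v i (Function.update s i t) = gvTau hn v i s := by
  rw [gvTau, gvTau, gvA_update, dif_pos h, dif_pos h]

lemma gvW_mem_iff {n k : ℕ} (hn : 0 < n) (v : Fin n → (Fin n → Fin k) → ℝ)
    (i : Fin n) (s : Fin n → Fin k) :
    i ∈ gvW hn v s ↔ (gvA hn v i s).Nonempty ∧ gvTau hn v i s ≤ s i := by
  constructor
  · rintro hi
    obtain ⟨t, ht, hw⟩ := (Finset.mem_filter.1 hi).2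
    have htA : t ∈ gvA hn v i s := Finset.mem_filter.2 ⟨Finset.mem_univ _, hw⟩
    have hne : (gvA hn v i s).Nonempty := ⟨t, htA⟩
    refine ⟨hne, ?_⟩
    rw [gvTau, dif_pos hne]
    exact le_trans (Finset.min'_le _ _ htA) ht
  · rintro ⟨hne, hle⟩
    refine Finset.mem_filter.2 ⟨Finset.mem_univ _, ⟨gvTau hn v i s, hle, ?_⟩⟩
    have : gvTau hn v i s ∈ gvA hn v i s := by
      rw [gvTau, dif_pos hne]; exact Finset.min'_mem _ _
    exact (Finset.mem_filter.1 this).2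

lemma gvW_mem_update_iff {n k : ℕ} (hn : 0 < n) (v : Fin n → (Fin n → Fin k) → ℝ)
    (i : Fin n) (s : Fin n → Fin k) (t : Fin k) :
    i ∈ gvW hn v (Function.update s i t) ↔
      (gvA hn v i s).Nonempty ∧ gvTau hn v i s ≤ t := by
  rw [gvW_mem_iff, gvA_update, Function.update_self]
  constructor
  · rintro ⟨hne, h⟩; exact ⟨hne, by rwa [gvTau_update hn v i s t hne] at h⟩
  · rintro ⟨hne, h⟩; exact ⟨hne, by rwa [gvTau_update hn v i s t hne]⟩

lemma gvW_winner_mem {n k : ℕ} (hn : 0 < n) (v : Fin n → (Fin n → Fin k) → ℝ)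
    (s : Fin n → Fin k) : gvWinner hn v s ∈ gvW hn v s := by
  refine Finset.mem_filter.2 ⟨Finset.mem_univ _, ⟨s (gvWinner hn v s), le_refl _, ?_⟩⟩
  rw [Function.update_eq_self]

lemma gv_pairs_card (k : ℕ) :
    (Finset.univ.filter fun q : Fin k × Fin k => q.2 < q.1).card ≤ k * (k - 1) / 2 := by
  have h1 : (Finset.univ.filter fun q : Fin k × Fin k => q.2 < q.1).card
      = ∑ a : Fin k, ((Finset.univ.filter fun q : Fin k × Fin k => q.2 < q.1).filter
          fun q => q.1 = a).card :=
    Finset.card_eq_sum_card_fiberwise (fun x _ => Finset.mem_univ x.1)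
  have h2 : ∀ a : Fin k, ((Finset.univ.filter fun q : Fin k × Fin k => q.2 < q.1).filter
      fun q => q.1 = a).card ≤ (a : ℕ) := by
    intro a
    have := Finset.card_le_card_of_injOn (fun q : Fin k × Fin k => q.2)
      (s := (Finset.univ.filter fun q : Fin k × Fin k => q.2 < q.1).filter fun q => q.1 = a)
      (t := Finset.Iio a)
      (by intro q hq
          simp only [Finset.mem_coe, Finset.mem_filter, Finset.mem_univ, true_and] at hq ⊢
          exact Finset.mem_Iio.2 (hq.2 ▸ hq.1))
      (by intro q hq q' hq' hqq
          simp only [Finset.mem_coe, Finset.mem_filter, Finset.mem_univ, true_and] at hq hq'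
          exact Prod.ext (hq.2.trans hq'.2.symm) hqq)
    rwa [Fin.card_Iio] at this
  calc (Finset.univ.filter fun q : Fin k × Fin k => q.2 < q.1).card
      ≤ ∑ a : Fin k, (a : ℕ) := by rw [h1]; exact Finset.sum_le_sum fun a _ => h2 a
    _ = ∑ i ∈ Finset.range k, i := Fin.sum_univ_eq_sum_range (fun i => i) k
    _ = k * (k - 1) / 2 := Finset.sum_range_id k

lemma gvW_card {n k ℓ : ℕ} (hn : 0 < n) (g : Fin n → Fin ℓ)
    (v : Fin n → (Fin n → Fin k) → ℝ)
    (hv_sym : ∀ (j : Fin n) (s : Fin n → Fin k) (π : Equiv.Perm (Fin n)),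
      g ∘ π = g → v j (s ∘ π) = v j s)
    (s : Fin n → Fin k) :
    (gvW hn v s).card ≤ ℓ * (k * (k - 1) / 2) + 1 := by
  classical
  set T : Finset (Fin n × Fin k) := Finset.univ.filter fun p => p.2 ≤ s p.1 with hT
  set F : Fin n × Fin k → Fin n := fun p => gvWinner hn v (Function.update s p.1 p.2) with hF
  set d : Fin n × Fin k → Option (Fin ℓ × Fin k × Fin k) :=
    fun p => if p.2 = s p.1 then none else some (g p.1, s p.1, p.2) with hd
  -- descriptors determine the winner
  have key : ∀ p ∈ T, ∀ q ∈ T, d p = d q → F p = F q := by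
    rintro ⟨i, t⟩ hp ⟨i', t'⟩ hq hdpq
    simp only [hd] at hdpq
    by_cases h1 : t = s i
    · by_cases h2 : t' = s i'
      · simp only [hF]
        rw [h1, h2, Function.update_eq_self, Function.update_eq_self]
      · rw [if_pos h1, if_neg h2] at hdpq; exact absurd hdpq (by simp)
    · by_cases h2 : t' = s i'
      · rw [if_neg h1, if_pos h2] at hdpq; exact absurd hdpq (by simp)
      · rw [if_neg h1, if_neg h2] at hdpq
        have hg : g i = g i' := by simpa using congrArg (fun o => o.map Prod.fst) hdpq
        have hs : s i = s i' := by
          simpa using congrArg (fun o => o.map (fun z => z.2.1)) hdpq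
        have ht : t = t' := by
          simpa using congrArg (fun o => o.map (fun z => z.2.2)) hdpq
        subst ht
        by_cases hii : i = i'
        · subst hii; rfl
        · -- swap i and i'
          set π : Equiv.Perm (Fin n) := Equiv.swap i i' with hπ
          have hgπ : g ∘ π = g := by
            funext j
            simp only [Function.comp_apply, hπ]
            rcases eq_or_ne j i with rfl | hji
            · rw [Equiv.swap_apply_left]; exact hg.symm
            · rcases eq_or_ne j i' with rfl | hji'
              · rw [Equiv.swap_apply_right]; exact hg
              · rw [Equiv.swap_apply_of_ne_of_ne hji hji']
          have hprof : Function.update s i' t = (Function.update s i t) ∘ π := by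
            funext j
            simp only [Function.comp_apply, hπ]
            rcases eq_or_ne j i with rfl | hji
            · rw [Equiv.swap_apply_left, Function.update_of_ne hii,
                Function.update_of_ne (Ne.symm hii)]
              exact hs
            · rcases eq_or_ne j i' with rfl | hji'
              · rw [Equiv.swap_apply_right, Function.update_self, Function.update_self]
              · rw [Equiv.swap_apply_of_ne_of_ne hji hji',
                  Function.update_of_ne hji', Function.update_of_ne hji]
          simp only [hF]
          apply gvWinner_congr
          intro j
          rw [hprof, hv_sym j _ π hgπ]
  -- factor F through d on T
  have hGex : ∀ p ∈ T, ∃ q, q ∈ T ∧ d q = d p := fun p hp => ⟨p, hp, rfl⟩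
  set G : Option (Fin ℓ × Fin k × Fin k) → Fin n := fun o =>
    if h : ∃ q, q ∈ T ∧ d q = o then F h.choose else gvWinner hn v s with hG
  have hGd : ∀ p ∈ T, G (d p) = F p := by
    intro p hp
    have h : ∃ q, q ∈ T ∧ d q = d p := ⟨p, hp, rfl⟩
    simp only [hG, dif_pos h]
    exact key _ h.choose_spec.1 _ hp h.choose_spec.2
  -- gvW s ⊆ image of F on T
  have hsub : gvW hn v s ⊆ T.image F := by
    intro i hi
    obtain ⟨t, ht, hw⟩ := (Finset.mem_filter.1 hi).2
    exact Finset.mem_image.2 ⟨(i, t), Finset.mem_filter.2 ⟨Finset.mem_univ _, ht⟩, hw⟩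
  have h1 : (gvW hn v s).card ≤ (T.image d).card := by
    calc (gvW hn v s).card ≤ (T.image F).card := Finset.card_le_card hsub
      _ = (T.image fun p => G (d p)).card := by
          congr 1; exact Finset.image_congr fun p hp => (hGd p hp).symm
      _ = ((T.image d).image G).card := by rw [Finset.image_image]; rfl
      _ ≤ (T.image d).card := Finset.card_image_le
  -- image of d is small
  have h2 : T.image d ⊆ insert none
      (((Finset.univ : Finset (Fin ℓ)) ×ˢ
        (Finset.univ.filter fun q : Fin k × Fin k => q.2 < q.1)).image
        fun z => some (z.1, z.2.1, z.2.2)) := by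
    intro o ho
    obtain ⟨p, hp, rfl⟩ := Finset.mem_image.1 ho
    simp only [hd]
    by_cases h : p.2 = s p.1
    · rw [if_pos h]; exact Finset.mem_insert_self _ _
    · rw [if_neg h]
      apply Finset.mem_insert_of_mem
      refine Finset.mem_image.2 ⟨(g p.1, (s p.1, p.2)), ?_, rfl⟩
      have hple : p.2 ≤ s p.1 := (Finset.mem_filter.1 hp).2
      exact Finset.mem_product.2 ⟨Finset.mem_univ _,
        Finset.mem_filter.2 ⟨Finset.mem_univ _, lt_of_le_of_ne hple h⟩⟩
  calc (gvW hn v s).card ≤ (T.image d).card := h1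
    _ ≤ (insert none
      (((Finset.univ : Finset (Fin ℓ)) ×ˢ
        (Finset.univ.filter fun q : Fin k × Fin k => q.2 < q.1)).image
        fun z => some (z.1, z.2.1, z.2.2))).card := Finset.card_le_card h2
    _ ≤ (((Finset.univ : Finset (Fin ℓ)) ×ˢ
        (Finset.univ.filter fun q : Fin k × Fin k => q.2 < q.1)).image
        fun z => some (z.1, z.2.1, z.2.2)).card + 1 := Finset.card_insert_le _ _
    _ ≤ ((Finset.univ : Finset (Fin ℓ)) ×ˢ
        (Finset.univ.filter fun q : Fin k × Fin k => q.2 < q.1)).card + 1 := by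
          exact Nat.add_le_add_right Finset.card_image_le 1
    _ = ℓ * (Finset.univ.filter fun q : Fin k × Fin k => q.2 < q.1).card + 1 := by
          rw [Finset.card_product, Finset.card_univ, Fintype.card_fin]
    _ ≤ ℓ * (k * (k - 1) / 2) + 1 := by
          exact Nat.add_le_add_right (Nat.mul_le_mul_left ℓ (gv_pairs_card k)) 1


/-- For every `n ≥ 1`, `k ≥ 2`, `ℓ ≥ 1`, group assignment `g`, and every
family of nonnegative valuations that are weakly increasing (pointwise order) and
symmetric within expertise groups, with `ρ = min n (ℓ·(k(k-1)/2) + 1)`, there exists a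
feasible per-bidder monotone allocation rule `x` taking values in `{0, 1/ρ}`, which at
every profile allocates `1/ρ` to some welfare-maximizing bidder, together with payments
making the mechanism ex-post IC and ex-post IR, and achieving welfare at least
`(1/ρ)·max_i v i s` at every profile `s`. -/
theorem general_valuations_welfare_upper_bound
    (n k ℓ : ℕ) (hn : 1 ≤ n) (hk : 2 ≤ k) (hℓ : 1 ≤ ℓ)
    (g : Fin n → Fin ℓ)
    (v : Fin n → (Fin n → Fin k) → ℝ)
    (hv_nonneg : ∀ i s, 0 ≤ v i s)
    (hv_mono : ∀ i, Monotone (v i))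
    (hv_sym : ∀ (j : Fin n) (s : Fin n → Fin k) (π : Equiv.Perm (Fin n)),
      g ∘ π = g → v j (s ∘ π) = v j s) :
    ∃ x p : (Fin n → Fin k) → Fin n → ℝ,
      -- feasibility
      (∀ s i, 0 ≤ x s i) ∧ (∀ s, ∑ i, x s i ≤ 1) ∧
      -- per-bidder monotonicity
      (∀ (i : Fin n) (s : Fin n → Fin k),
        Monotone fun t => x (Function.update s i t) i) ∧
      -- allocation probabilities are 0 or 1/ρ
      (∀ s i, x s i = 0 ∨
        x s i = 1 / ((min n (ℓ * (k * (k - 1) / 2) + 1) : ℕ) : ℝ)) ∧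
      -- at every profile some welfare maximizer receives probability 1/ρ
      (∀ s : Fin n → Fin k, ∃ i : Fin n, (∀ j, v j s ≤ v i s) ∧
        x s i = 1 / ((min n (ℓ * (k * (k - 1) / 2) + 1) : ℕ) : ℝ)) ∧
      -- nonnegative payments
      (∀ s i, 0 ≤ p s i) ∧
      -- ex-post incentive compatibility
      (∀ (i : Fin n) (s : Fin n → Fin k) (t : Fin k),
        x s i * v i s - p s i ≥
          x (Function.update s i t) i * v i s - p (Function.update s i t) i) ∧
      -- ex-post individual rationality
      (∀ (i : Fin n) (s : Fin n → Fin k), x s i * v i s - p s i ≥ 0) ∧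
      -- (1/ρ)-approximation of the optimal welfare
      (∀ s : Fin n → Fin k,
        ∑ i, x s i * v i s ≥
          (1 / ((min n (ℓ * (k * (k - 1) / 2) + 1) : ℕ) : ℝ)) *
            Finset.univ.sup' ⟨⟨0, hn⟩, Finset.mem_univ _⟩ (fun i => v i s)) := by
  classical
  have hn0 : 0 < n := hn
  set ρ : ℕ := min n (ℓ * (k * (k - 1) / 2) + 1) with hρdef
  have hρ1 : 1 ≤ ρ := le_min hn (Nat.succ_le_succ (Nat.zero_le _))
  have hρR : (0:ℝ) < (ρ:ℝ) := by exact_mod_cast hρ1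
  have hinv : (0:ℝ) ≤ 1 / (ρ:ℝ) := by positivity
  have hWcard : ∀ s : Fin n → Fin k, (gvW hn0 v s).card ≤ ρ := fun s =>
    le_min (le_trans (Finset.card_le_card (Finset.subset_univ _)) (by simp))
      (gvW_card hn0 g v hv_sym s)
  have hupdle : ∀ (s : Fin n → Fin k) (i : Fin n) (t t' : Fin k), t ≤ t' →
      Function.update s i t ≤ Function.update s i t' := by
    intro s i t t' h j
    rcases eq_or_ne j i with rfl | hj
    · simpa using h
    · rw [Function.update_of_ne hj, Function.update_of_ne hj]
  refine ⟨fun s i => if i ∈ gvW hn0 v s then 1 / (ρ:ℝ) else 0,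
    fun s i => if i ∈ gvW hn0 v s then
      (1 / (ρ:ℝ)) * v i (Function.update s i (gvTau hn0 v i s)) else 0,
    ?_, ?_, ?_, ?_, ?_, ?_, ?_, ?_, ?_⟩
  · intro s i
    dsimp only
    split <;> [exact hinv; exact le_refl 0]
  · intro s
    have : ∑ i, (if i ∈ gvW hn0 v s then 1 / (ρ:ℝ) else 0)
        = ((gvW hn0 v s).card : ℝ) * (1 / (ρ:ℝ)) := by
      rw [Finset.sum_ite_mem, Finset.univ_inter, Finset.sum_const, nsmul_eq_mul]
    rw [this]
    calc ((gvW hn0 v s).card : ℝ) * (1 / (ρ:ℝ)) ≤ (ρ:ℝ) * (1 / (ρ:ℝ)) := by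
          apply mul_le_mul_of_nonneg_right _ hinv
          exact_mod_cast hWcard s
      _ = 1 := by field_simp
  · intro i s
    intro t t' htt'
    dsimp only
    by_cases h : i ∈ gvW hn0 v (Function.update s i t)
    · obtain ⟨hA, hτ⟩ := (gvW_mem_update_iff hn0 v i s t).1 h
      have h' : i ∈ gvW hn0 v (Function.update s i t') :=
        (gvW_mem_update_iff hn0 v i s t').2 ⟨hA, le_trans hτ htt'⟩
      rw [if_pos h, if_pos h']
    · rw [if_neg h]
      split <;> [exact hinv; exact le_refl 0]
  · intro s i
    dsimp only
    split <;> [exact Or.inr rfl; exact Or.inl rfl]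
  · intro s
    refine ⟨gvWinner hn0 v s, gvWinner_spec hn0 v s, ?_⟩
    dsimp only
    rw [if_pos (gvW_winner_mem hn0 v s)]
  · intro s i
    dsimp only
    split
    · exact mul_nonneg hinv (hv_nonneg _ _)
    · exact le_refl 0
  · intro i s t
    dsimp only
    by_cases hA : (gvA hn0 v i s).Nonempty
    · set τ : Fin k := gvTau hn0 v i s with hτdef
      have hτs : gvTau hn0 v i (Function.update s i t) = τ := gvTau_update hn0 v i s t hA
      have hupd2 : Function.update (Function.update s i t) i τ = Function.update s i τ :=
        Function.update_idem ..
      by_cases hw : i ∈ gvW hn0 v s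
      · have hτle : τ ≤ s i := ((gvW_mem_iff hn0 v i s).1 hw).2
        have hvle : v i (Function.update s i τ) ≤ v i s := by
          have := hupdle s i τ (s i) hτle
          rw [Function.update_eq_self] at this
          exact hv_mono i this
        by_cases hw' : i ∈ gvW hn0 v (Function.update s i t)
        · rw [if_pos hw, if_pos hw, if_pos hw', if_pos hw', hτs, hupd2]
        · rw [if_pos hw, if_pos hw, if_neg hw', if_neg hw']
          have h1 : 1 / (ρ:ℝ) * v i (Function.update s i τ) ≤ 1 / (ρ:ℝ) * v i s :=
            mul_le_mul_of_nonneg_left hvle hinv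
          simp only [zero_mul, sub_zero]
          linarith
      · have hτgt : s i < τ := by
          by_contra hcon
          exact hw ((gvW_mem_iff hn0 v i s).2 ⟨hA, not_lt.1 hcon⟩)
        have hvge : v i s ≤ v i (Function.update s i τ) := by
          have := hupdle s i (s i) τ (le_of_lt hτgt)
          rw [Function.update_eq_self] at this
          exact hv_mono i this
        by_cases hw' : i ∈ gvW hn0 v (Function.update s i t)
        · rw [if_neg hw, if_neg hw, if_pos hw', if_pos hw', hτs, hupd2]
          have h1 : 1 / (ρ:ℝ) * v i s ≤ 1 / (ρ:ℝ) * v i (Function.update s i τ) :=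
            mul_le_mul_of_nonneg_left hvge hinv
          simp only [zero_mul, sub_zero]
          linarith
        · rw [if_neg hw, if_neg hw, if_neg hw', if_neg hw']
    · have hw : i ∉ gvW hn0 v s := fun h => hA ((gvW_mem_iff hn0 v i s).1 h).1
      have hw' : i ∉ gvW hn0 v (Function.update s i t) := fun h =>
        hA ((gvW_mem_update_iff hn0 v i s t).1 h).1
      rw [if_neg hw, if_neg hw, if_neg hw', if_neg hw']
  · intro i s
    dsimp only
    by_cases hw : i ∈ gvW hn0 v s
    · rw [if_pos hw, if_pos hw]
      have hτle : gvTau hn0 v i s ≤ s i := ((gvW_mem_iff hn0 v i s).1 hw).2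
      have hvle : v i (Function.update s i (gvTau hn0 v i s)) ≤ v i s := by
        have := hupdle s i (gvTau hn0 v i s) (s i) hτle
        rw [Function.update_eq_self] at this
        exact hv_mono i this
      have h1 : 1 / (ρ:ℝ) * v i (Function.update s i (gvTau hn0 v i s))
          ≤ 1 / (ρ:ℝ) * v i s := mul_le_mul_of_nonneg_left hvle hinv
      linarith
    · rw [if_neg hw, if_neg hw]
      simp
  · intro s
    have hterm : ∀ j ∈ Finset.univ, 0 ≤ (if j ∈ gvW hn0 v s then 1 / (ρ:ℝ) else 0) * v j s := by
      intro j _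
      apply mul_nonneg _ (hv_nonneg _ _)
      split <;> [exact hinv; exact le_refl 0]
    have hsingle := Finset.single_le_sum hterm (Finset.mem_univ (gvWinner hn0 v s))
    rw [if_pos (gvW_winner_mem hn0 v s)] at hsingle
    have hsup : Finset.univ.sup' ⟨⟨0, hn⟩, Finset.mem_univ _⟩ (fun i => v i s)
        ≤ v (gvWinner hn0 v s) s :=
      Finset.sup'_le _ _ fun j _ => gvWinner_spec hn0 v s j
    calc (1 / (ρ:ℝ)) * Finset.univ.sup' ⟨⟨0, hn⟩, Finset.mem_univ _⟩ (fun i => v i s)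
        ≤ (1 / (ρ:ℝ)) * v (gvWinner hn0 v s) s := mul_le_mul_of_nonneg_left hsup hinv
      _ ≤ ∑ i, (if i ∈ gvW hn0 v s then 1 / (ρ:ℝ) else 0) * v i s := hsingle
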